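/- There exists a constant c > 0 such that for every real Hilbert space H, every T > 0, every integer M ≥ 2, with Δt = T/M and t_m = mΔt, and every three times continuously differentiable f : [0,T] → H, one has Δt · Σ_{m=1}^{M−1} ‖ s_m ‖² ≤ c Δt² ∫₀^T ‖f'''(t)‖² dt, where s_m = (1/4) f''(t_{m+1}) + (1/2) f''(t_m) + (1/4) f''(t_{m−1}) − ( f(t_{m+1}) − 2 f(t_m) + f(t_{m−1}) ) / Δt². -/

import Mathlib

open intervalIntegral MeasureTheory Set

section aux

variable {H : Type} [NormedAddCommGroup H] [NormedSpace ℝ H] [CompleteSpace H]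
variable {T : ℝ} {f f' f'' f''' : ℝ → H}

lemma cs_lemma {g : ℝ → ℝ} {a b : ℝ} (hab : a ≤ b) (hg : ContinuousOn g (Icc a b)) :
    (∫ s in a..b, g s) ^ 2 ≤ (b - a) * ∫ s in a..b, (g s) ^ 2 := by
  rcases eq_or_lt_of_le hab with rfl | hlt
  · simp
  set d : ℝ := b - a with hd
  have hd0 : 0 < d := by simp [hd]; linarith
  set A : ℝ := ∫ s in a..b, g s with hA
  have hgi : IntervalIntegrable g volume a b :=
    (hg.mono (by rw [uIcc_of_le hab])).intervalIntegrable
  have hg2i : IntervalIntegrable (fun s => (g s) ^ 2) volume a b :=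
    ((hg.pow 2).mono (by rw [uIcc_of_le hab])).intervalIntegrable
  have h1 : (0:ℝ) ≤ ∫ s in a..b, (d * g s - A) ^ 2 :=
    intervalIntegral.integral_nonneg hab (fun s _ => sq_nonneg _)
  have h2 : ∫ s in a..b, (d * g s - A) ^ 2
      = d ^ 2 * (∫ s in a..b, (g s) ^ 2) - 2 * d * A * A + d * A ^ 2 := by
    have : (fun s => (d * g s - A) ^ 2)
        = fun s => (d ^ 2 * (g s) ^ 2 - (2 * d * A) * g s) + A ^ 2 := by
      funext s; ring
    rw [this, intervalIntegral.integral_add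
        (((hg2i.const_mul _).sub (hgi.const_mul _))) intervalIntegrable_const,
      intervalIntegral.integral_sub (hg2i.const_mul _) (hgi.const_mul _),
      intervalIntegral.integral_const_mul, intervalIntegral.integral_const_mul,
      intervalIntegral.integral_const]
    simp only [smul_eq_mul, ← hA, ← hd]
  rw [h2] at h1
  nlinarith [sq_nonneg A, sq_nonneg d]

lemma taylor_aux
    (hf : ∀ s ∈ Icc (0:ℝ) T, HasDerivWithinAt f (f' s) (Icc 0 T) s)
    (hf' : ∀ s ∈ Icc (0:ℝ) T, HasDerivWithinAt f' (f'' s) (Icc 0 T) s)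
    (hf'' : ∀ s ∈ Icc (0:ℝ) T, HasDerivWithinAt f'' (f''' s) (Icc 0 T) s)
    (hcont : ContinuousOn f''' (Icc 0 T))
    {a b : ℝ} (h0 : 0 ≤ a) (hab : a ≤ b) (hbT : b ≤ T) (p : ℝ) :
    (∫ s in a..b, ((p - s) ^ 2 / 2) • f''' s)
      = (f b + (p - b) • f' b + ((p - b) ^ 2 / 2) • f'' b)
        - (f a + (p - a) • f' a + ((p - a) ^ 2 / 2) • f'' a) := by
  have hsub : Icc a b ⊆ Icc (0:ℝ) T := Icc_subset_Icc h0 hbT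
  have hcf : ContinuousOn f (Icc a b) :=
    ContinuousOn.mono (fun s hs => (hf s hs).continuousWithinAt) hsub
  have hcf' : ContinuousOn f' (Icc a b) :=
    ContinuousOn.mono (fun s hs => (hf' s hs).continuousWithinAt) hsub
  have hcf'' : ContinuousOn f'' (Icc a b) :=
    ContinuousOn.mono (fun s hs => (hf'' s hs).continuousWithinAt) hsub
  have hgcont : ContinuousOn
      (fun s => f s + (p - s) • f' s + ((p - s) ^ 2 / 2) • f'' s) (Icc a b) := by
    refine (hcf.add (ContinuousOn.smul ?_ hcf')).add (ContinuousOn.smul ?_ hcf'')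
    · exact (continuous_const.sub continuous_id).continuousOn
    · exact (((continuous_const.sub continuous_id).pow 2).div_const 2).continuousOn
  have hint : IntervalIntegrable (fun s => ((p - s) ^ 2 / 2) • f''' s) volume a b := by
    apply ContinuousOn.intervalIntegrable
    rw [uIcc_of_le hab]
    exact ContinuousOn.smul
      ((((continuous_const.sub continuous_id).pow 2).div_const 2).continuousOn)
      (hcont.mono hsub)
  refine integral_eq_sub_of_hasDeriv_right_of_le hab hgcont (fun x hx => ?_) hint
  have hxmem : Icc (0:ℝ) T ∈ nhds x := by
    apply Icc_mem_nhds <;> [linarith [hx.1]; linarith [hx.2]]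
  have hd1 : HasDerivAt f (f' x) x :=
    (hf x (hsub (Ioo_subset_Icc_self hx))).hasDerivAt hxmem
  have hd2 : HasDerivAt f' (f'' x) x :=
    (hf' x (hsub (Ioo_subset_Icc_self hx))).hasDerivAt hxmem
  have hd3 : HasDerivAt f'' (f''' x) x :=
    (hf'' x (hsub (Ioo_subset_Icc_self hx))).hasDerivAt hxmem
  have hp : HasDerivAt (fun s : ℝ => p - s) (-1) x := by
    simpa using (hasDerivAt_id x).const_sub p
  have hw : HasDerivAt (fun s : ℝ => (p - s) ^ 2 / 2) (-(p - x)) x := by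
    have : HasDerivAt (fun s : ℝ => (p - s) ^ 2 / 2) (((2:ℕ):ℝ) * (p - x) ^ (2 - 1) * -1 / 2) x :=
      (hp.pow 2).div_const 2
    convert this using 1
    push_cast; ring
  have : HasDerivAt
      (fun s => f s + (p - s) • f' s + ((p - s) ^ 2 / 2) • f'' s)
      (f' x + ((p - x) • f'' x + (-1 : ℝ) • f' x)
        + (((p - x) ^ 2 / 2) • f''' x + (-(p - x)) • f'' x)) x :=
    (hd1.add (hp.smul hd2)).add (hw.smul hd3)
  have heq : f' x + ((p - x) • f'' x + (-1 : ℝ) • f' x)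
      + (((p - x) ^ 2 / 2) • f''' x + (-(p - x)) • f'' x)
      = ((p - x) ^ 2 / 2) • f''' x := by module
  rw [heq] at this
  exact this.hasDerivWithinAt

lemma ftc_aux
    (hf'' : ∀ s ∈ Icc (0:ℝ) T, HasDerivWithinAt f'' (f''' s) (Icc 0 T) s)
    (hcont : ContinuousOn f''' (Icc 0 T))
    {a b : ℝ} (h0 : 0 ≤ a) (hab : a ≤ b) (hbT : b ≤ T) :
    (∫ s in a..b, f''' s) = f'' b - f'' a := by
  have hsub : Icc a b ⊆ Icc (0:ℝ) T := Icc_subset_Icc h0 hbT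
  refine integral_eq_sub_of_hasDeriv_right_of_le hab
    (ContinuousOn.mono (fun s hs => (hf'' s hs).continuousWithinAt) hsub) (fun x hx => ?_)
    ((hcont.mono (by rw [uIcc_of_le hab]; exact hsub)).intervalIntegrable)
  have hxmem : Icc (0:ℝ) T ∈ nhds x := by
    apply Icc_mem_nhds <;> [linarith [hx.1]; linarith [hx.2]]
  exact (((hf'' x (hsub (Ioo_subset_Icc_self hx))).hasDerivAt hxmem)).hasDerivWithinAt

set_option maxHeartbeats 1000000 in
lemma step_lemma
    (hf : ∀ s ∈ Icc (0:ℝ) T, HasDerivWithinAt f (f' s) (Icc 0 T) s)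
    (hf' : ∀ s ∈ Icc (0:ℝ) T, HasDerivWithinAt f' (f'' s) (Icc 0 T) s)
    (hf'' : ∀ s ∈ Icc (0:ℝ) T, HasDerivWithinAt f'' (f''' s) (Icc 0 T) s)
    (hcont : ContinuousOn f''' (Icc 0 T))
    {a h : ℝ} (h0 : 0 ≤ a) (hh : 0 < h) (hT : a + 2 * h ≤ T) :
    ‖(1/4 : ℝ) • f'' (a + 2*h) + (1/2 : ℝ) • f'' (a + h) + (1/4 : ℝ) • f'' a
        - ((h ^ 2)⁻¹ : ℝ) • (f (a + 2*h) - (2:ℝ) • f (a + h) + f a)‖ ^ 2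
      ≤ 9/8 * h * ((∫ s in a..(a + h), ‖f''' s‖ ^ 2)
          + ∫ s in (a + h)..(a + 2*h), ‖f''' s‖ ^ 2) := by
  have h1T : a + h ≤ T := by linarith
  have h1 : a ≤ a + h := by linarith
  have h2 : a + h ≤ a + 2*h := by linarith
  have h10 : 0 ≤ a + h := by linarith
  have hne : (h:ℝ) ^ 2 ≠ 0 := by positivity
  set Q1 : H := ∫ s in (a+h)..(a+2*h), f''' s with hQ1def
  set Q2 : H := ∫ s in a..(a+h), f''' s with hQ2def
  set R1 : H := ∫ s in (a+h)..(a+2*h), ((a + 2*h - s) ^ 2 / 2) • f''' s with hR1def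
  set R2 : H := ∫ s in a..(a+h), ((a - s) ^ 2 / 2) • f''' s with hR2def
  have hQ1 : Q1 = f'' (a+2*h) - f'' (a+h) := ftc_aux hf'' hcont h10 h2 hT
  have hQ2 : Q2 = f'' (a+h) - f'' a := ftc_aux hf'' hcont h0 h1 h1T
  have hR1 : R1 = (f (a+2*h) + (a+2*h - (a+2*h)) • f' (a+2*h)
        + ((a+2*h - (a+2*h)) ^ 2 / 2) • f'' (a+2*h))
      - (f (a+h) + (a+2*h - (a+h)) • f' (a+h)
        + ((a+2*h - (a+h)) ^ 2 / 2) • f'' (a+h)) :=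
    taylor_aux hf hf' hf'' hcont h10 h2 hT (a+2*h)
  have hR2 : R2 = (f (a+h) + (a - (a+h)) • f' (a+h) + ((a - (a+h)) ^ 2 / 2) • f'' (a+h))
      - (f a + (a - a) • f' a + ((a - a) ^ 2 / 2) • f'' a) :=
    taylor_aux hf hf' hf'' hcont h0 h1 h1T a
  have ea : a + 2*h - (a+2*h) = 0 := by ring
  have eb : a + 2*h - (a+h) = h := by ring
  have ec : a - (a+h) = -h := by ring
  have ed : a - a = 0 := by ring
  rw [ea, eb] at hR1
  rw [ec, ed] at hR2
  simp only [zero_smul, add_zero, ne_eq, zero_pow, OfNat.ofNat_ne_zero,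
    not_false_eq_true, zero_div] at hR1 hR2
  -- expand second difference
  have e2 : f'' (a+2*h) = f'' (a+h) + Q1 := by rw [hQ1]; abel
  have e0 : f'' a = f'' (a+h) - Q2 := by rw [hQ2]; abel
  have expand : f (a+2*h) - (2:ℝ) • f (a+h) + f a = (h^2 : ℝ) • f'' (a+h) + R1 - R2 := by
    rw [hR1, hR2]
    have : ((-h : ℝ)) ^ 2 = h ^ 2 := by ring
    rw [this]
    have : ((h : ℝ) ^ 2 / 2) • f'' (a+h) + ((h : ℝ) ^ 2 / 2) • f'' (a+h)
        = (h ^ 2 : ℝ) • f'' (a+h) := by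
      rw [← add_smul]; congr 1; ring
    module
  have key : (1/4 : ℝ) • f'' (a + 2*h) + (1/2 : ℝ) • f'' (a + h) + (1/4 : ℝ) • f'' a
        - ((h ^ 2)⁻¹ : ℝ) • (f (a + 2*h) - (2:ℝ) • f (a + h) + f a)
      = (1/4 : ℝ) • Q1 - (1/4 : ℝ) • Q2 - ((h^2)⁻¹ : ℝ) • R1 + ((h^2)⁻¹ : ℝ) • R2 := by
    have inner : ((h^2)⁻¹ : ℝ) • ((h^2 : ℝ) • f'' (a+h) + R1 - R2)
        = f'' (a+h) + ((h^2)⁻¹ : ℝ) • R1 - ((h^2)⁻¹ : ℝ) • R2 := by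
      rw [smul_sub, smul_add, smul_smul, inv_mul_cancel₀ hne, one_smul]
    rw [e2, e0, expand, inner]
    module
  -- norm bounds
  set J1 : ℝ := ∫ s in (a+h)..(a+2*h), ‖f''' s‖ with hJ1def
  set J2 : ℝ := ∫ s in a..(a+h), ‖f''' s‖ with hJ2def
  have hsub1 : Icc (a+h) (a+2*h) ⊆ Icc (0:ℝ) T := Icc_subset_Icc h10 hT
  have hsub2 : Icc a (a+h) ⊆ Icc (0:ℝ) T := Icc_subset_Icc h0 h1T
  have hc1 : ContinuousOn f''' (Icc (a+h) (a+2*h)) := hcont.mono hsub1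
  have hc2 : ContinuousOn f''' (Icc a (a+h)) := hcont.mono hsub2
  have hJ1nn : 0 ≤ J1 := intervalIntegral.integral_nonneg h2 (fun s _ => norm_nonneg _)
  have hJ2nn : 0 ≤ J2 := intervalIntegral.integral_nonneg h1 (fun s _ => norm_nonneg _)
  have hQ1n : ‖Q1‖ ≤ J1 := intervalIntegral.norm_integral_le_integral_norm h2
  have hQ2n : ‖Q2‖ ≤ J2 := intervalIntegral.norm_integral_le_integral_norm h1
  have hR1n : ‖R1‖ ≤ (h^2/2) * J1 := by
    calc ‖R1‖ ≤ ∫ s in (a+h)..(a+2*h), ‖((a + 2*h - s) ^ 2 / 2) • f''' s‖ :=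
          intervalIntegral.norm_integral_le_integral_norm h2
      _ ≤ ∫ s in (a+h)..(a+2*h), (h^2/2) * ‖f''' s‖ := by
          apply intervalIntegral.integral_mono_on h2
          · apply ContinuousOn.intervalIntegrable
            rw [uIcc_of_le h2]
            exact (ContinuousOn.smul
              ((((continuous_const.sub continuous_id).pow 2).div_const 2).continuousOn)
              hc1).norm
          · apply ContinuousOn.intervalIntegrable
            rw [uIcc_of_le h2]
            exact continuousOn_const.mul hc1.norm
          · intro s hs
            rw [norm_smul]
            have hs1 := hs.1; have hs2 := hs.2
            have : ‖(a + 2*h - s) ^ 2 / 2‖ ≤ h^2/2 := by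
              rw [Real.norm_of_nonneg (by positivity)]
              nlinarith
            exact mul_le_mul_of_nonneg_right this (norm_nonneg _) |>.trans_eq rfl
      _ = (h^2/2) * J1 := intervalIntegral.integral_const_mul _ _
  have hR2n : ‖R2‖ ≤ (h^2/2) * J2 := by
    calc ‖R2‖ ≤ ∫ s in a..(a+h), ‖((a - s) ^ 2 / 2) • f''' s‖ :=
          intervalIntegral.norm_integral_le_integral_norm h1
      _ ≤ ∫ s in a..(a+h), (h^2/2) * ‖f''' s‖ := by
          apply intervalIntegral.integral_mono_on h1
          · apply ContinuousOn.intervalIntegrable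
            rw [uIcc_of_le h1]
            exact (ContinuousOn.smul
              ((((continuous_const.sub continuous_id).pow 2).div_const 2).continuousOn)
              hc2).norm
          · apply ContinuousOn.intervalIntegrable
            rw [uIcc_of_le h1]
            exact continuousOn_const.mul hc2.norm
          · intro s hs
            rw [norm_smul]
            have hs1 := hs.1; have hs2 := hs.2
            have : ‖(a - s) ^ 2 / 2‖ ≤ h^2/2 := by
              rw [Real.norm_of_nonneg (by positivity)]
              nlinarith
            exact mul_le_mul_of_nonneg_right this (norm_nonneg _)
      _ = (h^2/2) * J2 := intervalIntegral.integral_const_mul _ _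
  have tri : ‖(1/4 : ℝ) • Q1 - (1/4 : ℝ) • Q2 - ((h^2)⁻¹ : ℝ) • R1 + ((h^2)⁻¹ : ℝ) • R2‖
      ≤ ‖(1/4 : ℝ) • Q1‖ + ‖(1/4 : ℝ) • Q2‖ + ‖((h^2)⁻¹ : ℝ) • R1‖
        + ‖((h^2)⁻¹ : ℝ) • R2‖ := by
    have t1 := norm_add_le ((1/4 : ℝ) • Q1 - (1/4 : ℝ) • Q2 - ((h^2)⁻¹ : ℝ) • R1)
      (((h^2)⁻¹ : ℝ) • R2)
    have t2 := norm_sub_le ((1/4 : ℝ) • Q1 - (1/4 : ℝ) • Q2) (((h^2)⁻¹ : ℝ) • R1)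
    have t3 := norm_sub_le ((1/4 : ℝ) • Q1) ((1/4 : ℝ) • Q2)
    linarith
  have hinv : (0:ℝ) ≤ (h^2)⁻¹ := by positivity
  have hnorm : ‖(1/4 : ℝ) • f'' (a + 2*h) + (1/2 : ℝ) • f'' (a + h) + (1/4 : ℝ) • f'' a
        - ((h ^ 2)⁻¹ : ℝ) • (f (a + 2*h) - (2:ℝ) • f (a + h) + f a)‖
      ≤ (3/4) * (J1 + J2) := by
    rw [key]
    refine tri.trans ?_
    rw [norm_smul, norm_smul, norm_smul, norm_smul,
      Real.norm_of_nonneg (by norm_num : (0:ℝ) ≤ 1/4),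
      Real.norm_of_nonneg hinv]
    have hR1n' : (h^2)⁻¹ * ‖R1‖ ≤ (1/2) * J1 := by
      calc (h^2)⁻¹ * ‖R1‖ ≤ (h^2)⁻¹ * ((h^2/2) * J1) := by
            exact mul_le_mul_of_nonneg_left hR1n hinv
        _ = (1/2) * J1 := by field_simp
    have hR2n' : (h^2)⁻¹ * ‖R2‖ ≤ (1/2) * J2 := by
      calc (h^2)⁻¹ * ‖R2‖ ≤ (h^2)⁻¹ * ((h^2/2) * J2) := by
            exact mul_le_mul_of_nonneg_left hR2n hinv
        _ = (1/2) * J2 := by field_simp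
    linarith [hQ1n, hQ2n, hR1n', hR2n']
  -- Cauchy–Schwarz on each subinterval
  have hcs1 : J1 ^ 2 ≤ h * ∫ s in (a+h)..(a+2*h), ‖f''' s‖ ^ 2 := by
    have := cs_lemma h2 hc1.norm
    have e : a + 2*h - (a+h) = h := by ring
    rwa [e] at this
  have hcs2 : J2 ^ 2 ≤ h * ∫ s in a..(a+h), ‖f''' s‖ ^ 2 := by
    have := cs_lemma h1 hc2.norm
    have e : a + h - a = h := by ring
    rwa [e] at this
  have hsq := pow_le_pow_left₀ (norm_nonneg _) hnorm 2
  refine hsq.trans ?_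
  nlinarith [hcs1, hcs2, sq_nonneg (J1 - J2), hh.le]

end aux

/-- Aggregated first-order consistency estimate of Lemma 3.4 of the paper: there is
a universal constant `c > 0` such that for every real Hilbert space, every time step
`Δt = T/M` and every `C³` function `f : [0,T] → H`,
`Δt Σ_{m=1}^{M−1} ‖s_m‖² ≤ c Δt² ∫₀^T ‖f'''‖²`, where `s_m` is the consistency error
of the (1/4, 1/2, 1/4) scheme. -/
theorem stmt11 :
    ∃ c : ℝ, 0 < c ∧
      ∀ (H : Type) [inst₁ : NormedAddCommGroup H] [inst₂ : InnerProductSpace ℝ H]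
        [inst₃ : CompleteSpace H],
        ∀ (T : ℝ), 0 < T → ∀ (M : ℕ), 2 ≤ M →
        ∀ (f f' f'' f''' : ℝ → H),
          (∀ s ∈ Set.Icc (0 : ℝ) T, HasDerivWithinAt f (f' s) (Set.Icc 0 T) s) →
          (∀ s ∈ Set.Icc (0 : ℝ) T, HasDerivWithinAt f' (f'' s) (Set.Icc 0 T) s) →
          (∀ s ∈ Set.Icc (0 : ℝ) T, HasDerivWithinAt f'' (f''' s) (Set.Icc 0 T) s) →
          ContinuousOn f''' (Set.Icc 0 T) →
          (T / M) * ∑ m ∈ Finset.Icc 1 (M - 1),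
              ‖(1 / 4 : ℝ) • f'' (((m : ℝ) + 1) * (T / M))
                  + (1 / 2 : ℝ) • f'' ((m : ℝ) * (T / M))
                  + (1 / 4 : ℝ) • f'' (((m : ℝ) - 1) * (T / M))
                  - (((T / M) ^ 2)⁻¹ : ℝ) •
                      (f (((m : ℝ) + 1) * (T / M)) - (2 : ℝ) • f ((m : ℝ) * (T / M))
                        + f (((m : ℝ) - 1) * (T / M)))‖ ^ 2
            ≤ c * (T / M) ^ 2 * ∫ s in (0 : ℝ)..T, ‖f''' s‖ ^ 2 := by
  refine ⟨3, by norm_num, ?_⟩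
  intro H _ _ _ T hT M hM f f' f'' f''' hf hf' hf'' hcont
  have hM0 : 0 < M := by omega
  have hMR : (0:ℝ) < M := by exact_mod_cast hM0
  set h : ℝ := T / M with hdef
  have hh : 0 < h := div_pos hT hMR
  have hMh : (M:ℝ) * h = T := by rw [hdef]; field_simp
  set G : ℝ → ℝ := fun s => ‖f''' s‖ ^ 2 with hG
  have hGc : ContinuousOn G (Set.Icc 0 T) := (hcont.norm).pow 2
  set B : ℕ → ℝ := fun k => ∫ s in ((k:ℝ) * h)..(((k:ℝ) + 1) * h), G s with hB
  have hBnn : ∀ k, 0 ≤ B k := by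
    intro k
    apply intervalIntegral.integral_nonneg (by nlinarith [Nat.cast_nonneg (α := ℝ) k])
    intro s _
    positivity
  have hBint : ∀ k, k < M → IntervalIntegrable G volume ((k:ℝ) * h) (((k:ℝ) + 1) * h) := by
    intro k hk
    apply ContinuousOn.intervalIntegrable
    apply hGc.mono
    have hk1 : ((k:ℝ) + 1) ≤ (M:ℝ) := by exact_mod_cast Nat.succ_le_of_lt hk
    have hle : (k:ℝ) * h ≤ ((k:ℝ) + 1) * h := by nlinarith
    rw [Set.uIcc_of_le hle]
    apply Set.Icc_subset_Icc
    · positivity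
    · nlinarith
  have htot : ∑ k ∈ Finset.range M, B k = ∫ s in (0:ℝ)..T, G s := by
    have := intervalIntegral.sum_integral_adjacent_intervals
      (a := fun k : ℕ => (k:ℝ) * h) (μ := volume) (f := G) (n := M)
      (fun k hk => by push_cast; exact hBint k hk)
    simp only [Nat.cast_zero, zero_mul, Nat.cast_ofNat] at this
    rw [hMh] at this
    rw [← this]
    apply Finset.sum_congr rfl
    intro k _
    have : ((k+1:ℕ):ℝ) = (k:ℝ) + 1 := by push_cast; ring
    rw [hB, this]
  set I : ℝ := ∫ s in (0:ℝ)..T, G s with hI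
  have hInn : 0 ≤ I := intervalIntegral.integral_nonneg hT.le (fun s _ => by positivity)
  -- per-term bound
  have hb : ∀ m ∈ Finset.Icc 1 (M-1),
      ‖(1 / 4 : ℝ) • f'' (((m : ℝ) + 1) * h) + (1 / 2 : ℝ) • f'' ((m : ℝ) * h)
        + (1 / 4 : ℝ) • f'' (((m : ℝ) - 1) * h)
        - ((h ^ 2)⁻¹ : ℝ) • (f (((m : ℝ) + 1) * h) - (2 : ℝ) • f ((m : ℝ) * h)
            + f (((m : ℝ) - 1) * h))‖ ^ 2
      ≤ 9/8 * h * (B (m-1) + B m) := by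
    intro m hm
    obtain ⟨hm1, hm2⟩ := Finset.mem_Icc.mp hm
    have hm1R : (1:ℝ) ≤ (m:ℝ) := by exact_mod_cast hm1
    have hmM : m + 1 ≤ M := by omega
    have hmMR : (m:ℝ) + 1 ≤ (M:ℝ) := by exact_mod_cast hmM
    have h0 : 0 ≤ ((m:ℝ) - 1) * h := by nlinarith
    have hT2 : ((m:ℝ) - 1) * h + 2 * h ≤ T := by nlinarith
    have key := step_lemma hf hf' hf'' hcont h0 hh hT2
    have e2 : ((m:ℝ) - 1) * h + 2 * h = ((m:ℝ) + 1) * h := by ring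
    have e1 : ((m:ℝ) - 1) * h + h = (m:ℝ) * h := by ring
    rw [e2, e1] at key
    have eB1 : B (m-1) = ∫ s in (((m:ℝ) - 1) * h)..((m:ℝ) * h), G s := by
      have c1 : ((m-1:ℕ):ℝ) = (m:ℝ) - 1 := by
        rw [Nat.cast_sub hm1]; norm_num
      simp only [hB, c1]
      norm_num
    have eB2 : B m = ∫ s in ((m:ℝ) * h)..(((m:ℝ) + 1) * h), G s := rfl
    rw [eB1, eB2]
    exact key
  calc h * ∑ m ∈ Finset.Icc 1 (M - 1),
        ‖(1 / 4 : ℝ) • f'' (((m : ℝ) + 1) * h) + (1 / 2 : ℝ) • f'' ((m : ℝ) * h)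
          + (1 / 4 : ℝ) • f'' (((m : ℝ) - 1) * h)
          - ((h ^ 2)⁻¹ : ℝ) • (f (((m : ℝ) + 1) * h) - (2 : ℝ) • f ((m : ℝ) * h)
              + f (((m : ℝ) - 1) * h))‖ ^ 2
      ≤ h * ∑ m ∈ Finset.Icc 1 (M - 1), 9/8 * h * (B (m-1) + B m) :=
        mul_le_mul_of_nonneg_left (Finset.sum_le_sum hb) hh.le
    _ = 9/8 * h * h * ((∑ m ∈ Finset.Icc 1 (M - 1), B (m-1))
          + ∑ m ∈ Finset.Icc 1 (M - 1), B m) := by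
        rw [← Finset.mul_sum, Finset.sum_add_distrib]; ring
    _ ≤ 3 * h ^ 2 * I := by
        have hS1 : (∑ m ∈ Finset.Icc 1 (M - 1), B (m-1)) ≤ I := by
          rw [← htot]
          have hIco : Finset.Icc 1 (M-1) = Finset.Ico 1 M := by
            rw [← Finset.Ico_add_one_right_eq_Icc]
            congr 1
            omega
          rw [hIco, Finset.sum_Ico_eq_sum_range]
          simp only [Nat.add_sub_cancel_left]
          exact Finset.sum_le_sum_of_subset_of_nonneg
            (Finset.range_subset_range.mpr (by omega)) (fun k _ _ => hBnn k)
        have hS2 : (∑ m ∈ Finset.Icc 1 (M - 1), B m) ≤ I := by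
          rw [← htot]
          exact Finset.sum_le_sum_of_subset_of_nonneg
            (fun x hx => by
              rw [Finset.mem_Icc] at hx
              exact Finset.mem_range.mpr (by omega)) (fun k _ _ => hBnn k)
        nlinarith [hh.le, mul_nonneg hh.le hh.le]
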